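/- Let V be a finite set, W ⊆ V nonempty, and let P : ({0,1}^k)^V → ℝ≥0 be log-supermodular (P(Y)P(Z) ≤ P(Y∨Z)P(Y∧Z) for pointwise-coordinatewise lattice operations). Define for u : W → {0,1}^k the marginal p(u) = ∑ { P(U) : U : V → {0,1}^k, U|_W = u }. Then p is log-supermodular on the lattice of functions W → {0,1}^k: p(y)·p(z) ≤ p(y∨z)·p(y∧z) for all y, z. -/

import Mathlib

open scoped Classical

/-- Marginalizing a log-supermodular non-negative function on `({0,1}^k)^V` to a
nonempty subset `W` of `V` preserves log-supermodularity. -/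
theorem stmt_9 {V : Type} [Fintype V] (k : ℕ) (W : Finset V) (hW : W.Nonempty)
    (P : (V → Fin k → Fin 2) → ℝ) (hP0 : ∀ U, 0 ≤ P U)
    (hlog : ∀ Y Z : V → Fin k → Fin 2,
      P Y * P Z ≤ P (fun v j => max (Y v j) (Z v j)) * P (fun v j => min (Y v j) (Z v j)))
    (y z : W → Fin k → Fin 2) :
    (∑ U : V → Fin k → Fin 2, if (∀ v : W, U (v : V) = y v) then P U else 0) *
      (∑ U : V → Fin k → Fin 2, if (∀ v : W, U (v : V) = z v) then P U else 0) ≤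
    (∑ U : V → Fin k → Fin 2,
        if (∀ v : W, U (v : V) = fun j => max (y v j) (z v j)) then P U else 0) *
      (∑ U : V → Fin k → Fin 2,
        if (∀ v : W, U (v : V) = fun j => min (y v j) (z v j)) then P U else 0) := by
  classical
  set f₁ : (V → Fin k → Fin 2) → ℝ :=
    fun U => if (∀ v : W, U (v : V) = y v) then P U else 0 with hf₁
  set f₂ : (V → Fin k → Fin 2) → ℝ :=
    fun U => if (∀ v : W, U (v : V) = z v) then P U else 0 with hf₂
  set f₄ : (V → Fin k → Fin 2) → ℝ :=
    fun U => if (∀ v : W, U (v : V) = fun j => max (y v j) (z v j)) then P U else 0 with hf₄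
  set f₃ : (V → Fin k → Fin 2) → ℝ :=
    fun U => if (∀ v : W, U (v : V) = fun j => min (y v j) (z v j)) then P U else 0 with hf₃
  have h1 : (0:(V → Fin k → Fin 2) → ℝ) ≤ f₁ := fun U => by
    simp only [hf₁]; split <;> simp [hP0]
  have h2 : (0:(V → Fin k → Fin 2) → ℝ) ≤ f₂ := fun U => by
    simp only [hf₂]; split <;> simp [hP0]
  have h3 : (0:(V → Fin k → Fin 2) → ℝ) ≤ f₃ := fun U => by
    simp only [hf₃]; split <;> simp [hP0]
  have h4 : (0:(V → Fin k → Fin 2) → ℝ) ≤ f₄ := fun U => by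
    simp only [hf₄]; split <;> simp [hP0]
  have key : ∀ Y Z : V → Fin k → Fin 2, f₁ Y * f₂ Z ≤ f₃ (Y ⊓ Z) * f₄ (Y ⊔ Z) := by
    intro Y Z
    by_cases hY : (∀ v : W, Y (v : V) = y v)
    · by_cases hZ : (∀ v : W, Z (v : V) = z v)
      · have hsup : (Y ⊔ Z) = fun v j => max (Y v j) (Z v j) := by
          funext v j; simp
        have hinf : (Y ⊓ Z) = fun v j => min (Y v j) (Z v j) := by
          funext v j; simp
        have c4 : (∀ v : W, (Y ⊔ Z) (v : V) = fun j => max (y v j) (z v j)) := by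
          intro v; rw [hsup]; funext j; simp [hY v, hZ v]
        have c3 : (∀ v : W, (Y ⊓ Z) (v : V) = fun j => min (y v j) (z v j)) := by
          intro v; rw [hinf]; funext j; simp [hY v, hZ v]
        simp only [hf₁, hf₂, hf₃, hf₄, if_pos hY, if_pos hZ, if_pos c3, if_pos c4]
        rw [hsup, hinf]
        exact le_of_le_of_eq (hlog Y Z) (mul_comm _ _)
      · simp only [hf₂, if_neg hZ, mul_zero]
        exact mul_nonneg (h3 _) (h4 _)
    · simp only [hf₁, if_neg hY, zero_mul]
      exact mul_nonneg (h3 _) (h4 _)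
  have H := four_functions_theorem_univ f₁ f₂ f₃ f₄ h1 h2 h3 h4 key
  linarith
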